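/- arXiv:1906.06200 — 2 statements merged into one kernel-verified Lean document; each statement's English description precedes it below -/
import Mathlib

section
/- If G is a graph with a clique cut-set K (i.e., V(G) = A ∪ K ∪ B where K is a clique, A and B are nonempty, and there are no edges between A and B), then G is perfect if and only if both induced subgraphs G[A ∪ K] and G[B ∪ K] are perfect. -/
open scoped Classical

namespace PlanePerfect

variable {V : Type*}

/-- A straight-line plane embedding of a simple graph. -/
structure PlaneEmbedding (G : SimpleGraph V) where
  pos : V → ℝ × ℝ
  inj : Function.Injective pos
  edges_disjoint : ∀ ⦃u v x y : V⦄, G.Adj u v → G.Adj x y →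
    ∀ p : ℝ × ℝ, p ∈ openSegment ℝ (pos u) (pos v) →
      p ∈ openSegment ℝ (pos x) (pos y) → s(u, v) = s(x, y)
  vertex_not_on_edge : ∀ ⦃u v w : V⦄, G.Adj u v →
    pos w ∉ openSegment ℝ (pos u) (pos v)

/-- The drawing (point set) of the induced subgraph on `W`. -/
def drawing {G : SimpleGraph V} (E : PlaneEmbedding G) (W : Set V) : Set (ℝ × ℝ) :=
  (E.pos '' W) ∪ ⋃ (u ∈ W), ⋃ (v ∈ W), ⋃ (_ : G.Adj u v), segment ℝ (E.pos u) (E.pos v)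

/-- The exterior (unbounded) region of the drawing of `G[W]`. -/
def outerRegion {G : SimpleGraph V} (E : PlaneEmbedding G) (W : Set V) : Set (ℝ × ℝ) :=
  {p | p ∉ drawing E W ∧
    ¬ Bornology.IsBounded (connectedComponentIn (drawing E W)ᶜ p)}

/-- Vertices of `W` on the boundary of the exterior face of `G[W]`. -/
def extBoundary {G : SimpleGraph V} (E : PlaneEmbedding G) (W : Set V) : Set V :=
  {v ∈ W | E.pos v ∈ closure (outerRegion E W)}

/-- Vertices drawn in the interior (bounded) region of the drawing of `G[W]`. -/
def intVerts {G : SimpleGraph V} (E : PlaneEmbedding G) (W : Set V) : Set V :=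
  {v | v ∉ W ∧ E.pos v ∉ drawing E W ∧
    Bornology.IsBounded (connectedComponentIn (drawing E W)ᶜ (E.pos v))}

/-- Vertices drawn in the exterior (unbounded) region of the drawing of `G[W]`. -/
def extVerts {G : SimpleGraph V} (E : PlaneEmbedding G) (W : Set V) : Set V :=
  {v | v ∉ W ∧ E.pos v ∉ drawing E W ∧
    ¬ Bornology.IsBounded (connectedComponentIn (drawing E W)ᶜ (E.pos v))}

/-- The plane graph `G[W]` is a near-triangulation: every bounded face is a triangle. -/
def NearTriOn {G : SimpleGraph V} (E : PlaneEmbedding G) (W : Set V) : Prop :=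
  ∀ p : ℝ × ℝ, p ∉ drawing E W →
    Bornology.IsBounded (connectedComponentIn (drawing E W)ᶜ p) →
    ∃ x y z, x ∈ W ∧ y ∈ W ∧ z ∈ W ∧ G.Adj x y ∧ G.Adj y z ∧ G.Adj x z ∧
      frontier (connectedComponentIn (drawing E W)ᶜ p) = drawing E {x, y, z}

/-- `xyz` is a facial triangle of the plane graph `G`. -/
def IsFacialTriangle {G : SimpleGraph V} (E : PlaneEmbedding G) (x y z : V) : Prop :=
  G.Adj x y ∧ G.Adj y z ∧ G.Adj x z ∧
  ∃ p, p ∉ drawing E Set.univ ∧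
    frontier (connectedComponentIn (drawing E Set.univ)ᶜ p) = drawing E {x, y, z}

/-- `xyz` is a separating triangle of the plane graph `G[W]`. -/
def SepTriOn {G : SimpleGraph V} (E : PlaneEmbedding G) (W : Set V) (x y z : V) : Prop :=
  x ∈ W ∧ y ∈ W ∧ z ∈ W ∧ G.Adj x y ∧ G.Adj y z ∧ G.Adj x z ∧
  (intVerts E {x, y, z} ∩ W).Nonempty ∧ (extVerts E {x, y, z} ∩ W).Nonempty

/-- `uv` is an edge separator of `G[W]`. -/
def EdgeSepOn (G : SimpleGraph V) (W : Set V) (u v : V) : Prop :=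
  u ∈ W ∧ v ∈ W ∧ G.Adj u v ∧ ¬ (G.induce (W \ {u, v})).Connected

/-- `G[W]` is `2`-connected. -/
def TwoConnOn (G : SimpleGraph V) (W : Set V) : Prop :=
  3 ≤ W.ncard ∧ (G.induce W).Connected ∧ ∀ v ∈ W, (G.induce (W \ {v})).Connected

/-- `G[W]` is a W-triangulation: a `2`-connected plane near-triangulation with
no edge separator and no separating triangle. -/
def WTriOn {G : SimpleGraph V} (E : PlaneEmbedding G) (W : Set V) : Prop :=
  TwoConnOn G W ∧ NearTriOn E W ∧ (∀ u v, ¬ EdgeSepOn G W u v) ∧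
    ∀ x y z, ¬ SepTriOn E W x y z

/-- A W-component: a maximal vertex set inducing a W-triangulation. -/
def IsWComponent {G : SimpleGraph V} (E : PlaneEmbedding G) (W : Set V) : Prop :=
  WTriOn E W ∧ ∀ W', W ⊆ W' → WTriOn E W' → W' = W

/-- Vertex set of a closed walk. -/
def supportSet {G : SimpleGraph V} {u : V} (w : G.Walk u u) : Set V := {x | x ∈ w.support}

/-- `C` is an odd hole of `G`: the vertex set of an induced cycle of odd length `≥ 5`. -/
def IsOddHole (G : SimpleGraph V) (C : Set V) : Prop :=
  ∃ (v : V) (w : G.Walk v v), w.IsCycle ∧ Odd w.length ∧ 5 ≤ w.length ∧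
    (∀ x y, x ∈ w.support → y ∈ w.support → G.Adj x y → w.toSubgraph.Adj x y) ∧
    C = supportSet w

/-- `C` is a minimal odd hole: no other odd hole lies within `C ∪ Int(C)`. -/
def MinimalOddHole {G : SimpleGraph V} (E : PlaneEmbedding G) (C : Set V) : Prop :=
  IsOddHole G C ∧ ∀ C', IsOddHole G C' → C' ⊆ C ∪ intVerts E C → C' = C

/-- A graph is perfect if every induced subgraph has chromatic number equal to
its clique number. -/
def IsPerfect (G : SimpleGraph V) : Prop :=
  ∀ S : Set V, (G.induce S).chromaticNumber = ((G.induce S).cliqueNum : ℕ∞)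

/-- Closed neighbourhood of a set of vertices. -/
def closedNbhd (G : SimpleGraph V) (X : Set V) : Set V :=
  X ∪ {v | ∃ x ∈ X, G.Adj x v}

/-- Degree of a vertex, as the cardinality of its neighbour set. -/
noncomputable def deg (G : SimpleGraph V) (v : V) : ℕ := (G.neighborSet v).ncard

/-- `G` is an even W-triangulation (w.r.t. the embedding `E`): every internal
vertex has even degree. -/
def EvenWTri {G : SimpleGraph V} (E : PlaneEmbedding G) : Prop :=
  WTriOn E Set.univ ∧ ∀ v, v ∉ extBoundary E Set.univ → Even (deg G v)


/-- The auxiliary graph `G'` on `S ∪ T`: edges of the odd hole `C` (= all `G`-edges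
within `S`, since `C` is induced), edges of the boundary cycle `C'` (the cycle `w'`),
and all `G`-edges between `S` and `T`. -/
def auxGraph (G : SimpleGraph V) (S T : Set V) {b₀ : V} (w' : G.Walk b₀ b₀) :
    SimpleGraph V :=
  SimpleGraph.fromRel (fun u v =>
    (u ∈ S ∧ v ∈ S ∧ G.Adj u v) ∨ w'.toSubgraph.Adj u v ∨ (u ∈ S ∧ v ∈ T ∧ G.Adj u v))

end PlanePerfect

open PlanePerfect

namespace CliqueCutAux

variable {V W : Type*}

lemma colorable_of_hom {G : SimpleGraph V} {H : SimpleGraph W} (f : G →g H) {n : ℕ}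
    (h : H.Colorable n) : G.Colorable n := ⟨h.some.comp f⟩

lemma iso_chromaticNumber_eq {G : SimpleGraph V} {H : SimpleGraph W} (f : G ≃g H) :
    G.chromaticNumber = H.chromaticNumber :=
  le_antisymm (SimpleGraph.chromaticNumber_le_of_forall_imp fun _ => colorable_of_hom f.toHom)
    (SimpleGraph.chromaticNumber_le_of_forall_imp fun _ => colorable_of_hom f.symm.toHom)

lemma cliqueNum_le_of_embedding [Fintype W] {G : SimpleGraph V} {H : SimpleGraph W}
    (f : G ↪g H) : G.cliqueNum ≤ H.cliqueNum := by
  rw [SimpleGraph.cliqueNum]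
  refine csSup_le ⟨0, ∅, SimpleGraph.isNClique_empty.mpr rfl⟩ ?_
  rintro n ⟨s, hs⟩
  have hcl : H.IsClique (s.map f.toEmbedding) := by
    intro a ha b hb hab
    simp only [Finset.coe_map, Set.mem_image, Finset.mem_coe] at ha hb
    obtain ⟨x, hx, rfl⟩ := ha
    obtain ⟨y, hy, rfl⟩ := hb
    exact f.map_adj_iff.mpr (hs.1 hx hy (fun h => hab (by rw [h])))
  have := SimpleGraph.IsClique.card_le_cliqueNum (tc := hcl)
  rwa [Finset.card_map, hs.2] at this

lemma iso_cliqueNum_eq [Fintype V] [Fintype W] {G : SimpleGraph V} {H : SimpleGraph W}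
    (f : G ≃g H) : G.cliqueNum = H.cliqueNum :=
  le_antisymm (cliqueNum_le_of_embedding f.toEmbedding)
    (cliqueNum_le_of_embedding f.symm.toEmbedding)

noncomputable def induceInduceIso (G : SimpleGraph V) (Ws : Set V) (S : Set Ws) :
    (G.induce Ws).induce S ≃g G.induce (Subtype.val '' S) where
  toEquiv := Equiv.Set.image Subtype.val S Subtype.val_injective
  map_rel_iff' := by
    intro a b
    simp [Equiv.Set.image, Equiv.Set.imageOfInjOn, SimpleGraph.comap]

def induceEmb (G : SimpleGraph V) {s t : Set V} (h : s ⊆ t) : G.induce s ↪g G.induce t where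
  toFun := Set.inclusion h
  inj' := Set.inclusion_injective h
  map_rel_iff' := Iff.rfl

lemma isPerfect_induce [Fintype V] {G : SimpleGraph V} (h : PlanePerfect.IsPerfect G)
    (Ws : Set V) : PlanePerfect.IsPerfect (G.induce Ws) := by
  intro S
  have i := induceInduceIso G Ws S
  rw [iso_chromaticNumber_eq i, iso_cliqueNum_eq i]
  exact h _

lemma side_colorable [Fintype V] {G : SimpleGraph V} {X S : Set V}
    (hP : PlanePerfect.IsPerfect (G.induce X)) :
    ((G.induce S).induce (Subtype.val ⁻¹' X)).Colorable ((G.induce S).cliqueNum) := by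
  have i1 := induceInduceIso G S (Subtype.val ⁻¹' X)
  have i2 := induceInduceIso G X (Subtype.val ⁻¹' S)
  have hset : (Subtype.val '' (Subtype.val ⁻¹' X : Set S) : Set V)
      = Subtype.val '' (Subtype.val ⁻¹' S : Set X) := by
    rw [Subtype.image_preimage_coe, Subtype.image_preimage_coe, Set.inter_comm]
  rw [← SimpleGraph.chromaticNumber_le_iff_colorable]
  have hχ : ((G.induce S).induce (Subtype.val ⁻¹' X)).chromaticNumber
      = (((G.induce S).induce (Subtype.val ⁻¹' X)).cliqueNum : ℕ∞) := by
    rw [iso_chromaticNumber_eq i1, iso_cliqueNum_eq i1, hset,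
      ← iso_chromaticNumber_eq i2, ← iso_cliqueNum_eq i2]
    exact hP _
  rw [hχ, Nat.cast_le]
  refine cliqueNum_le_of_embedding (SimpleGraph.Embedding.comp ?_ i1.toEmbedding)
  have hsub : (Subtype.val '' (Subtype.val ⁻¹' X : Set S) : Set V) ⊆ S := by
    rw [Subtype.image_preimage_coe]; exact Set.inter_subset_left
  exact induceEmb G hsub

lemma combine (G : SimpleGraph V) (A K B : Set V)
    (hU : A ∪ K ∪ B = Set.univ) (hK : G.IsClique K)
    (hsep : ∀ a ∈ A, ∀ b ∈ B, ¬ G.Adj a b)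
    {n : ℕ} (h₁ : (G.induce (A ∪ K)).Colorable n) (h₂ : (G.induce (B ∪ K)).Colorable n) :
    G.Colorable n := by
  obtain ⟨c₁⟩ := h₁
  obtain ⟨c₂⟩ := h₂
  have hmem : ∀ v : V, v ∉ A ∪ K → v ∈ B ∪ K := by
    intro v hv
    have : v ∈ A ∪ K ∪ B := hU.symm ▸ Set.mem_univ v
    rcases this with h | h
    · exact absurd h hv
    · exact Or.inl h
  have hinj₂ : ∀ k k' : K, c₂ ⟨k, Or.inr k.2⟩ = c₂ ⟨k', Or.inr k'.2⟩ → k = k' := by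
    intro k k' h
    by_contra hne
    have hadj : G.Adj k k' := hK k.2 k'.2 (fun hh => hne (Subtype.ext hh))
    exact c₂.valid (by exact hadj) h
  have hinj₁ : ∀ k k' : K, c₁ ⟨k, Or.inr k.2⟩ = c₁ ⟨k', Or.inr k'.2⟩ → k = k' := by
    intro k k' h
    by_contra hne
    have hadj : G.Adj k k' := hK k.2 k'.2 (fun hh => hne (Subtype.ext hh))
    exact c₁.valid (by exact hadj) h
  set p : Fin n → Prop := fun t => ∃ k : K, c₂ ⟨k, Or.inr k.2⟩ = t with hp
  set q : Fin n → Prop := fun t => ∃ k : K, c₁ ⟨k, Or.inr k.2⟩ = t with hq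
  have e₂bij : Function.Bijective (fun k : K => (⟨c₂ ⟨k, Or.inr k.2⟩, ⟨k, rfl⟩⟩ : Subtype p)) := by
    constructor
    · intro k k' h
      exact hinj₂ k k' (congrArg Subtype.val h)
    · rintro ⟨t, k, hk⟩
      exact ⟨k, Subtype.ext hk⟩
  have e₁bij : Function.Bijective (fun k : K => (⟨c₁ ⟨k, Or.inr k.2⟩, ⟨k, rfl⟩⟩ : Subtype q)) := by
    constructor
    · intro k k' h
      exact hinj₁ k k' (congrArg Subtype.val h)
    · rintro ⟨t, k, hk⟩
      exact ⟨k, Subtype.ext hk⟩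
  set e₂ := Equiv.ofBijective _ e₂bij with he₂
  set e₁ := Equiv.ofBijective _ e₁bij with he₁
  set σ0 : Subtype p ≃ Subtype q := e₂.symm.trans e₁ with hσ0
  set σ : Equiv.Perm (Fin n) := σ0.extendSubtype with hσ
  have key : ∀ (k : V) (hk : k ∈ K), σ (c₂ ⟨k, Or.inr hk⟩) = c₁ ⟨k, Or.inr hk⟩ := by
    intro k hk
    have hpk : p (c₂ ⟨k, Or.inr hk⟩) := ⟨⟨k, hk⟩, rfl⟩
    rw [hσ, Equiv.extendSubtype_apply_of_mem σ0 _ hpk]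
    have h2 : e₂.symm ⟨c₂ ⟨k, Or.inr hk⟩, hpk⟩ = ⟨k, hk⟩ := by
      rw [Equiv.symm_apply_eq]
      rfl
    simp only [hσ0, Equiv.trans_apply, h2]
    rfl
  refine ⟨SimpleGraph.Coloring.mk
    (fun v => if h : v ∈ A ∪ K then c₁ ⟨v, h⟩ else σ (c₂ ⟨v, hmem v h⟩)) ?_⟩
  intro u v huv
  by_cases hu : u ∈ A ∪ K <;> by_cases hv : v ∈ A ∪ K <;>
      simp only [dif_pos, dif_neg, hu, hv, dite_true, dite_false]
  · exact c₁.valid (by exact huv)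
  · have hvB : v ∈ B := by
      rcases hmem v hv with h | h
      · exact h
      · exact absurd (Or.inr h) hv
    rcases hu with huA | huK
    · exact absurd huv (hsep u huA v hvB)
    · rw [← key u huK]
      intro h
      have := σ.injective h
      exact c₂.valid (v := ⟨u, Or.inr huK⟩) (w := ⟨v, hmem v hv⟩) (by exact huv) this
  · have huB : u ∈ B := by
      rcases hmem u hu with h | h
      · exact h
      · exact absurd (Or.inr h) hu
    rcases hv with hvA | hvK
    · exact absurd huv.symm (hsep v hvA u huB)
    · rw [← key v hvK]
      intro h
      have := σ.injective h
      exact c₂.valid (v := ⟨u, hmem u hu⟩) (w := ⟨v, Or.inr hvK⟩) (by exact huv) this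
  · intro h
    have := σ.injective h
    exact c₂.valid (v := ⟨u, hmem u hu⟩) (w := ⟨v, hmem v hv⟩) (by exact huv) this

end CliqueCutAux

open CliqueCutAux


/-- Clique cut-set decomposition preserves perfectness. -/
theorem clique_cutset_perfect {V : Type*} [Fintype V] (G : SimpleGraph V)
    (A K B : Set V) (hU : A ∪ K ∪ B = Set.univ)
    (hAK : Disjoint A K) (hBK : Disjoint B K) (hAB : Disjoint A B)
    (hK : G.IsClique K) (hA : A.Nonempty) (hB : B.Nonempty)
    (hsep : ∀ a ∈ A, ∀ b ∈ B, ¬ G.Adj a b) :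
    IsPerfect G ↔ IsPerfect (G.induce (A ∪ K)) ∧ IsPerfect (G.induce (B ∪ K)) := by
  constructor
  · intro hP
    exact ⟨isPerfect_induce hP _, isPerfect_induce hP _⟩
  · rintro ⟨hPA, hPB⟩
    intro S
    set n := (G.induce S).cliqueNum with hn
    have hω : (n : ℕ∞) ≤ (G.induce S).chromaticNumber := by
      obtain ⟨s, hs⟩ := (G.induce S).exists_isNClique_cliqueNum
      have := hs.1.card_le_chromaticNumber
      rwa [hs.2] at this
    refine le_antisymm ?_ hω
    rw [SimpleGraph.chromaticNumber_le_iff_colorable]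
    have h₁ : ((G.induce S).induce
        ((Subtype.val ⁻¹' A : Set S) ∪ (Subtype.val ⁻¹' K : Set S))).Colorable n := by
      rw [← Set.preimage_union]
      exact side_colorable hPA
    have h₂ : ((G.induce S).induce
        ((Subtype.val ⁻¹' B : Set S) ∪ (Subtype.val ⁻¹' K : Set S))).Colorable n := by
      rw [← Set.preimage_union]
      exact side_colorable hPB
    refine combine (G.induce S) (Subtype.val ⁻¹' A) (Subtype.val ⁻¹' K) (Subtype.val ⁻¹' B)
      ?_ ?_ ?_ h₁ h₂
    · ext x
      simp only [Set.mem_union, Set.mem_preimage, Set.mem_univ, iff_true]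
      have : (x : V) ∈ A ∪ K ∪ B := hU.symm ▸ Set.mem_univ _
      exact this
    · intro a ha b hb hab
      exact hK ha hb (fun h => hab (Subtype.ext h))
    · intro a ha b hb
      exact hsep _ ha _ hb
end

section
/- If Δ is a separating triangle in a plane near-triangulation G, with Int(Δ) and Ext(Δ) the vertex sets interior and exterior to Δ, then G is perfect if and only if the subgraphs induced by Int(Δ) ∪ V(Δ) and Ext(Δ) ∪ V(Δ) are both perfect. -/
open scoped Classical

open PlanePerfect

/-! ### Auxiliary lemmas -/

open SimpleGraph Set

section Aux

variable {V : Type*}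

/-- Two injections into a fintype differ by a permutation. -/
lemma exists_perm_comp {α β : Type*} [Fintype α] [Fintype β] {f g : β → α}
    (hf : Function.Injective f) (hg : Function.Injective g) :
    ∃ σ : Equiv.Perm α, ∀ b, σ (g b) = f b := by
  classical
  have hcard : Fintype.card (Set.range g) = Fintype.card (Set.range f) :=
    (Fintype.card_congr (Equiv.ofInjective g hg)).symm.trans
      (Fintype.card_congr (Equiv.ofInjective f hf))
  have hcard' : Fintype.card (↥(Set.range g)ᶜ) = Fintype.card (↥(Set.range f)ᶜ) := by
    rw [Fintype.card_compl_set, Fintype.card_compl_set, hcard]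
  let e1 : Set.range g ≃ Set.range f :=
    (Equiv.ofInjective g hg).symm.trans (Equiv.ofInjective f hf)
  let e2 := Fintype.equivOfCardEq hcard'
  refine ⟨(Equiv.Set.sumCompl (Set.range g)).symm.trans
    ((e1.sumCongr e2).trans (Equiv.Set.sumCompl (Set.range f))), fun b => ?_⟩
  simp only [Equiv.trans_apply]
  rw [Equiv.Set.sumCompl_symm_apply_of_mem (Set.mem_range_self b)]
  have h1 : e1 ⟨g b, Set.mem_range_self b⟩ = Equiv.ofInjective f hf b := by
    simp only [e1, Equiv.trans_apply]
    congr 1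
    exact (Equiv.symm_apply_eq _).2 rfl
  simp [h1]

/-- No vertex of the graph is drawn on the drawing of `G[W]` unless it lies in `W`. -/
lemma pos_not_mem_drawing {G : SimpleGraph V} (E : PlaneEmbedding G) {W : Set V} {v : V}
    (hv : v ∉ W) : E.pos v ∉ drawing E W := by
  rintro (⟨w, hw, hweq⟩ | h)
  · exact hv ((E.inj hweq) ▸ hw)
  · simp only [Set.mem_iUnion] at h
    obtain ⟨a, ha, b, hb, hadj, hseg⟩ := h
    rw [← insert_endpoints_openSegment] at hseg
    rcases hseg with h1 | h2 | h3
    · exact hv ((E.inj h1) ▸ ha)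
    · exact hv ((E.inj h2) ▸ hb)
    · exact E.vertex_not_on_edge hadj h3

/-- Every vertex lies on the triangle, in its interior, or in its exterior. -/
lemma mem_tri_or_int_or_ext {G : SimpleGraph V} (E : PlaneEmbedding G) (W : Set V) (v : V) :
    v ∈ W ∨ v ∈ intVerts E W ∨ v ∈ extVerts E W := by
  classical
  by_cases hv : v ∈ W
  · exact Or.inl hv
  · have hd := pos_not_mem_drawing E hv
    by_cases hb : Bornology.IsBounded (connectedComponentIn (drawing E W)ᶜ (E.pos v))
    · exact Or.inr (Or.inl ⟨hv, hd, hb⟩)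
    · exact Or.inr (Or.inr ⟨hv, hd, hb⟩)

/-- No edge joins an interior vertex to an exterior vertex. -/
lemma not_adj_int_ext {G : SimpleGraph V} (E : PlaneEmbedding G) {W : Set V} {u v : V}
    (hu : u ∈ intVerts E W) (hv : v ∈ extVerts E W) : ¬ G.Adj u v := by
  intro hadj
  obtain ⟨huW, hud, hub⟩ := hu
  obtain ⟨hvW, hvd, hvb⟩ := hv
  set D := drawing E W with hD
  by_cases hseg : ∀ p ∈ segment ℝ (E.pos u) (E.pos v), p ∉ D
  · have hsub : segment ℝ (E.pos u) (E.pos v) ⊆ Dᶜ := fun p hp => hseg p hp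
    have hconn := (convex_segment (E.pos u) (E.pos v)).isPreconnected
    have h1 : segment ℝ (E.pos u) (E.pos v) ⊆ connectedComponentIn Dᶜ (E.pos u) :=
      hconn.subset_connectedComponentIn (left_mem_segment ℝ _ _) hsub
    have h2 : connectedComponentIn Dᶜ (E.pos u) = connectedComponentIn Dᶜ (E.pos v) :=
      connectedComponentIn_eq (h1 (right_mem_segment ℝ _ _))
    exact hvb (h2 ▸ hub)
  · push_neg at hseg
    obtain ⟨p, hp, hpD⟩ := hseg
    rw [← insert_endpoints_openSegment] at hp
    rcases hp with rfl | rfl | hp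
    · exact hud hpD
    · exact hvd hpD
    · rcases hpD with ⟨w, hw, hweq⟩ | h
      · exact E.vertex_not_on_edge hadj (hweq ▸ hp)
      · simp only [Set.mem_iUnion] at h
        obtain ⟨a, ha, b, hb, hab, hseg'⟩ := h
        rw [← insert_endpoints_openSegment] at hseg'
        rcases hseg' with heq | heq | hop
        · exact E.vertex_not_on_edge hadj (heq ▸ hp)
        · exact E.vertex_not_on_edge hadj (heq ▸ hp)
        · have hs := E.edges_disjoint hadj hab p hp hop
          rcases Sym2.eq_iff.mp hs with ⟨rfl, rfl⟩ | ⟨rfl, rfl⟩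
          · exact huW ha
          · exact huW hb

lemma inter_int_ext_eq {G : SimpleGraph V} (E : PlaneEmbedding G) (W : Set V) :
    (intVerts E W ∪ W) ∩ (extVerts E W ∪ W) = W := by
  ext v
  constructor
  · rintro ⟨h1 | h1, h2 | h2⟩
    · exact absurd h1.2.2 h2.2.2
    · exact h2
    · exact h1
    · exact h2
  · intro h
    exact ⟨Or.inr h, Or.inr h⟩

/-- G-cliques inside `T` describe cliques of the induced subgraph. -/
lemma isNClique_induce_iff [Fintype V] (G : SimpleGraph V) (T : Set V) (n : ℕ) :
    (∃ s, (G.induce T).IsNClique n s) ↔ ∃ s : Finset V, ↑s ⊆ T ∧ G.IsNClique n s := by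
  classical
  constructor
  · rintro ⟨s, hcl, hcard⟩
    refine ⟨s.map ⟨Subtype.val, Subtype.val_injective⟩, ?_, ?_, ?_⟩
    · intro v hv
      simp only [Finset.coe_map, Set.mem_image, Finset.mem_coe] at hv
      obtain ⟨a, _, rfl⟩ := hv
      exact a.2
    · intro a ha b hb hne
      simp only [Finset.coe_map, Set.mem_image, Finset.mem_coe] at ha hb
      obtain ⟨a', ha', rfl⟩ := ha
      obtain ⟨b', hb', rfl⟩ := hb
      have : (G.induce T).Adj a' b' := hcl ha' hb' (fun h => hne (congrArg Subtype.val h))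
      simpa using this
    · simpa using hcard
  · rintro ⟨s, hsub, hcl, hcard⟩
    refine ⟨s.subtype (· ∈ T), ?_, ?_⟩
    · rintro ⟨a, haT⟩ ha ⟨b, hbT⟩ hb hne
      rw [Finset.mem_coe, Finset.mem_subtype] at ha hb
      have : G.Adj a b := hcl ha hb (fun h => hne (Subtype.ext h))
      simpa using this
    · rw [Finset.card_subtype, Finset.filter_true_of_mem (fun a ha => hsub ha), hcard]

lemma cliqueNum_induce_eq [Fintype V] (G : SimpleGraph V) (T : Set V) :
    (G.induce T).cliqueNum = sSup {n | ∃ s : Finset V, ↑s ⊆ T ∧ G.IsNClique n s} := by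
  unfold SimpleGraph.cliqueNum
  congr 1
  ext n
  exact isNClique_induce_iff G T n

lemma cliqueNum_split [Fintype V] (G : SimpleGraph V) {A B : Set V} (S : Set V)
    (hU : ∀ v, v ∈ A ∨ v ∈ B)
    (hE : ∀ u v, u ∈ A → u ∉ B → v ∈ B → v ∉ A → ¬ G.Adj u v) :
    (G.induce S).cliqueNum = max (G.induce (S ∩ A)).cliqueNum (G.induce (S ∩ B)).cliqueNum := by
  classical
  rw [cliqueNum_induce_eq, cliqueNum_induce_eq, cliqueNum_induce_eq]
  have hset : {n | ∃ s : Finset V, ↑s ⊆ S ∧ G.IsNClique n s} =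
      {n | ∃ s : Finset V, ↑s ⊆ S ∩ A ∧ G.IsNClique n s} ∪
      {n | ∃ s : Finset V, ↑s ⊆ S ∩ B ∧ G.IsNClique n s} := by
    ext n
    constructor
    · rintro ⟨s, hsub, hcl⟩
      by_cases hex : ∃ a ∈ s, a ∈ A ∧ a ∉ B
      · obtain ⟨a, has, haA, haB⟩ := hex
        left
        refine ⟨s, fun b hb => ⟨hsub hb, ?_⟩, hcl⟩
        by_contra hbA
        have hbB : b ∈ B := (hU b).resolve_left hbA
        have hne : a ≠ b := fun h => hbA (h ▸ haA)
        exact hE a b haA haB hbB hbA (hcl.1 has hb hne)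
      · push_neg at hex
        right
        refine ⟨s, fun b hb => ⟨hsub hb, ?_⟩, hcl⟩
        rcases hU b with hbA | hbB
        · exact hex b hb hbA
        · exact hbB
    · rintro (⟨s, hsub, hcl⟩ | ⟨s, hsub, hcl⟩)
      · exact ⟨s, fun b hb => (hsub hb).1, hcl⟩
      · exact ⟨s, fun b hb => (hsub hb).1, hcl⟩
  have hbdd : ∀ T : Set V, BddAbove {n | ∃ s : Finset V, ↑s ⊆ T ∧ G.IsNClique n s} := by
    intro T
    refine ⟨Fintype.card V, ?_⟩
    rintro n ⟨s, -, -, rfl⟩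
    exact s.card_le_univ.trans (le_of_eq (Finset.card_univ))
  have hne : ∀ T : Set V, {n | ∃ s : Finset V, ↑s ⊆ T ∧ G.IsNClique n s}.Nonempty := by
    intro T
    exact ⟨0, ∅, by simp⟩
  rw [hset, csSup_union (hbdd _) (hne _) (hbdd _) (hne _)]

/-- `PerfOn G A`: every induced subgraph of `G` within `A` satisfies `χ = ω`. -/
def PerfOn [Fintype V] (G : SimpleGraph V) (A : Set V) : Prop :=
  ∀ T : Set V, T ⊆ A → (G.induce T).chromaticNumber = ((G.induce T).cliqueNum : ℕ∞)

lemma chromaticNumber_eq_of_iso {α β : Type*} {G : SimpleGraph α} {H : SimpleGraph β}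
    (e : G ≃g H) : G.chromaticNumber = H.chromaticNumber :=
  le_antisymm (chromaticNumber_mono_of_hom e.toEmbedding.toHom)
    (chromaticNumber_mono_of_hom e.symm.toEmbedding.toHom)

lemma cliqueNum_le_of_embedding {α β : Type*} [Fintype α] [Fintype β] {G : SimpleGraph α}
    {H : SimpleGraph β} (f : G ↪g H) : G.cliqueNum ≤ H.cliqueNum := by
  obtain ⟨s, hcl, hcard⟩ := G.exists_isNClique_cliqueNum
  have hcl' : H.IsClique (s.map f.toEmbedding) := by
    intro a ha b hb hne
    simp only [Finset.coe_map, Set.mem_image, Finset.mem_coe] at ha hb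
    obtain ⟨a', ha', rfl⟩ := ha
    obtain ⟨b', hb', rfl⟩ := hb
    exact f.map_adj_iff.mpr (hcl ha' hb' (fun h => hne (congrArg f h)))
  have := hcl'.card_le_cliqueNum
  rwa [Finset.card_map, hcard] at this

lemma cliqueNum_eq_of_iso {α β : Type*} [Fintype α] [Fintype β] {G : SimpleGraph α}
    {H : SimpleGraph β} (e : G ≃g H) : G.cliqueNum = H.cliqueNum :=
  le_antisymm (cliqueNum_le_of_embedding e.toEmbedding)
    (cliqueNum_le_of_embedding e.symm.toEmbedding)

/-- `(G.induce A).induce S` is isomorphic to `G.induce (val '' S)`. -/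
noncomputable def induceInduceIso (G : SimpleGraph V) (A : Set V) (S : Set ↥A) :
    (G.induce A).induce S ≃g G.induce (Subtype.val '' S) where
  toEquiv := Equiv.Set.image Subtype.val S Subtype.val_injective
  map_rel_iff' := by
    rintro ⟨a, ha⟩ ⟨b, hb⟩
    simp [Equiv.Set.image_apply, comap_adj]

/-- `(G.induce A).induce (val ⁻¹' T)` is isomorphic to `G.induce T` when `T ⊆ A`. -/
noncomputable def induceSubsetIso (G : SimpleGraph V) {A T : Set V} (hT : T ⊆ A) :
    (G.induce A).induce (Subtype.val ⁻¹' T) ≃g G.induce T where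
  toFun a := ⟨a.1.1, a.2⟩
  invFun v := ⟨⟨v.1, hT v.2⟩, v.2⟩
  left_inv a := rfl
  right_inv v := rfl
  map_rel_iff' := Iff.rfl

lemma isPerfect_induce_iff [Fintype V] (G : SimpleGraph V) (A : Set V) :
    IsPerfect (G.induce A) ↔ PerfOn G A := by
  classical
  constructor
  · intro h T hT
    have := h (Subtype.val ⁻¹' T)
    rwa [chromaticNumber_eq_of_iso (induceSubsetIso G hT),
      cliqueNum_eq_of_iso (induceSubsetIso G hT)] at this
  · intro h S
    have := h (Subtype.val '' S) (by rintro v ⟨w, -, rfl⟩; exact w.2)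
    rwa [← chromaticNumber_eq_of_iso (induceInduceIso G A S),
      ← cliqueNum_eq_of_iso (induceInduceIso G A S)] at this

/-- Gluing two perfect graphs along a clique cutset yields a perfect graph. -/
lemma perfOn_union [Fintype V] {G : SimpleGraph V} {A B : Set V}
    (hU : ∀ v, v ∈ A ∨ v ∈ B)
    (hK : G.IsClique (A ∩ B))
    (hE : ∀ u v, u ∈ A → u ∉ B → v ∈ B → v ∉ A → ¬ G.Adj u v)
    (hA : PerfOn G A) (hB : PerfOn G B) : PerfOn G Set.univ := by
  classical
  intro S _
  set S1 := S ∩ A with hS1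
  set S2 := S ∩ B with hS2
  set n1 := (G.induce S1).cliqueNum with hn1
  set n2 := (G.induce S2).cliqueNum with hn2
  set n := max n1 n2 with hn
  have hsplit : (G.induce S).cliqueNum = n := cliqueNum_split G S hU hE
  have hχ1 : (G.induce S1).chromaticNumber = (n1 : ℕ∞) := hA S1 Set.inter_subset_right
  have hχ2 : (G.induce S2).chromaticNumber = (n2 : ℕ∞) := hB S2 Set.inter_subset_right
  have hcol1 : (G.induce S1).Colorable n := by
    rw [← chromaticNumber_le_iff_colorable, hχ1]
    exact_mod_cast le_max_left n1 n2
  have hcol2 : (G.induce S2).Colorable n := by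
    rw [← chromaticNumber_le_iff_colorable, hχ2]
    exact_mod_cast le_max_right n1 n2
  obtain C1 := hcol1.some
  obtain C2 := hcol2.some
  -- permute C2 so the colorings agree on the cutset
  have hmem1 : ∀ k : ↥(S ∩ (A ∩ B)), k.1 ∈ S1 := fun k => ⟨k.2.1, k.2.2.1⟩
  have hmem2 : ∀ k : ↥(S ∩ (A ∩ B)), k.1 ∈ S2 := fun k => ⟨k.2.1, k.2.2.2⟩
  set f : ↥(S ∩ (A ∩ B)) → Fin n := fun k => C1 ⟨k.1, hmem1 k⟩ with hf
  set g : ↥(S ∩ (A ∩ B)) → Fin n := fun k => C2 ⟨k.1, hmem2 k⟩ with hg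
  have hfi : Function.Injective f := by
    intro k k' h
    by_contra hne
    have hvne : k.1 ≠ k'.1 := fun hh => hne (Subtype.ext hh)
    have hadj : G.Adj k.1 k'.1 := hK k.2.2 k'.2.2 hvne
    exact C1.valid (by simpa using hadj :
      (G.induce S1).Adj ⟨k.1, hmem1 k⟩ ⟨k'.1, hmem1 k'⟩) h
  have hgi : Function.Injective g := by
    intro k k' h
    by_contra hne
    have hvne : k.1 ≠ k'.1 := fun hh => hne (Subtype.ext hh)
    have hadj : G.Adj k.1 k'.1 := hK k.2.2 k'.2.2 hvne
    exact C2.valid (by simpa using hadj :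
      (G.induce S2).Adj ⟨k.1, hmem2 k⟩ ⟨k'.1, hmem2 k'⟩) h
  obtain ⟨σ, hσ⟩ := exists_perm_comp hfi hgi
  -- glue the colorings
  set c : ↥S → Fin n := fun v =>
    if h : v.1 ∈ A then C1 ⟨v.1, ⟨v.2, h⟩⟩
    else σ (C2 ⟨v.1, ⟨v.2, (hU v.1).resolve_left h⟩⟩) with hc
  have hvalid : ∀ {u v : ↥S}, (G.induce S).Adj u v → c u ≠ c v := by
    intro u v huv
    have hGuv : G.Adj u.1 v.1 := by simpa using huv
    have hvne : u.1 ≠ v.1 := hGuv.ne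
    by_cases hu : u.1 ∈ A <;> by_cases hv : v.1 ∈ A
    · simp only [hc, dif_pos hu, dif_pos hv]
      exact C1.valid (by simpa using hGuv :
        (G.induce S1).Adj ⟨u.1, ⟨u.2, hu⟩⟩ ⟨v.1, ⟨v.2, hv⟩⟩)
    · -- u ∈ A, v ∉ A (so v ∈ B)
      have hvB : v.1 ∈ B := (hU v.1).resolve_left hv
      have huB : u.1 ∈ B := by
        by_contra huB
        exact hE u.1 v.1 hu huB hvB hv hGuv
      have hkey : C1 ⟨u.1, ⟨u.2, hu⟩⟩ = σ (C2 ⟨u.1, ⟨u.2, huB⟩⟩) := by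
        have := hσ ⟨u.1, ⟨u.2, hu, huB⟩⟩
        simp only [hf, hg] at this
        exact this.symm
      simp only [hc, dif_pos hu, dif_neg hv]
      rw [hkey]
      intro heq
      have h2 : C2 ⟨u.1, ⟨u.2, huB⟩⟩ = C2 ⟨v.1, ⟨v.2, hvB⟩⟩ := σ.injective heq
      exact C2.valid (by simpa using hGuv :
        (G.induce S2).Adj ⟨u.1, ⟨u.2, huB⟩⟩ ⟨v.1, ⟨v.2, hvB⟩⟩) h2
    · -- u ∉ A, v ∈ A
      have huB : u.1 ∈ B := (hU u.1).resolve_left hu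
      have hvB : v.1 ∈ B := by
        by_contra hvB
        exact hE v.1 u.1 hv hvB huB hu hGuv.symm
      have hkey : C1 ⟨v.1, ⟨v.2, hv⟩⟩ = σ (C2 ⟨v.1, ⟨v.2, hvB⟩⟩) := by
        have := hσ ⟨v.1, ⟨v.2, hv, hvB⟩⟩
        simp only [hf, hg] at this
        exact this.symm
      simp only [hc, dif_neg hu, dif_pos hv]
      rw [hkey]
      intro heq
      have h2 : C2 ⟨u.1, ⟨u.2, huB⟩⟩ = C2 ⟨v.1, ⟨v.2, hvB⟩⟩ := σ.injective heq
      exact C2.valid (by simpa using hGuv :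
        (G.induce S2).Adj ⟨u.1, ⟨u.2, huB⟩⟩ ⟨v.1, ⟨v.2, hvB⟩⟩) h2
    · have huB : u.1 ∈ B := (hU u.1).resolve_left hu
      have hvB : v.1 ∈ B := (hU v.1).resolve_left hv
      simp only [hc, dif_neg hu, dif_neg hv]
      intro heq
      have h2 : C2 ⟨u.1, ⟨u.2, huB⟩⟩ = C2 ⟨v.1, ⟨v.2, hvB⟩⟩ := σ.injective heq
      exact C2.valid (by simpa using hGuv :
        (G.induce S2).Adj ⟨u.1, ⟨u.2, huB⟩⟩ ⟨v.1, ⟨v.2, hvB⟩⟩) h2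
  have hcol : (G.induce S).Colorable n := ⟨Coloring.mk c fun huv => hvalid huv⟩
  have hle : (G.induce S).chromaticNumber ≤ ((G.induce S).cliqueNum : ℕ∞) := by
    rw [hsplit]
    exact hcol.chromaticNumber_le
  have hge : ((G.induce S).cliqueNum : ℕ∞) ≤ (G.induce S).chromaticNumber := by
    obtain ⟨s, hcl, hcard⟩ := (G.induce S).exists_isNClique_cliqueNum
    calc ((G.induce S).cliqueNum : ℕ∞) = (s.card : ℕ∞) := by rw [hcard]
      _ ≤ (G.induce S).chromaticNumber := hcl.card_le_chromaticNumber
  exact le_antisymm hle hge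

end Aux


/-- A separating triangle of a plane near-triangulation splits it into two induced
subgraphs whose perfectness is equivalent to that of the whole graph. -/
theorem separating_triangle_perfect {V : Type*} [Fintype V] (G : SimpleGraph V)
    (E : PlaneEmbedding G) (hNT : NearTriOn E Set.univ) (x y z : V)
    (hsep : SepTriOn E Set.univ x y z) :
    IsPerfect G ↔
      IsPerfect (G.induce (intVerts E {x, y, z} ∪ {x, y, z})) ∧
      IsPerfect (G.induce (extVerts E {x, y, z} ∪ {x, y, z})) := by
  classical
  obtain ⟨-, -, -, hxy, hyz, hxz, -, -⟩ := hsep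
  set Δ : Set V := {x, y, z} with hΔ
  set A : Set V := intVerts E Δ ∪ Δ with hA
  set B : Set V := extVerts E Δ ∪ Δ with hB
  have hU : ∀ v, v ∈ A ∨ v ∈ B := by
    intro v
    rcases mem_tri_or_int_or_ext E Δ v with h | h | h
    · exact Or.inl (Or.inr h)
    · exact Or.inl (Or.inl h)
    · exact Or.inr (Or.inl h)
  have hABeq : A ∩ B = Δ := inter_int_ext_eq E Δ
  have hK : G.IsClique (A ∩ B) := by
    rw [hABeq]
    intro a ha b hb hne
    simp only [hΔ, Set.mem_insert_iff, Set.mem_singleton_iff] at ha hb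
    rcases ha with rfl | rfl | rfl <;> rcases hb with rfl | rfl | rfl <;>
      first
        | exact absurd rfl hne
        | exact hxy | exact hxy.symm
        | exact hyz | exact hyz.symm
        | exact hxz | exact hxz.symm
  have hE : ∀ u v, u ∈ A → u ∉ B → v ∈ B → v ∉ A → ¬ G.Adj u v := by
    intro u v huA huB hvB hvA
    have hu : u ∈ intVerts E Δ := by
      rcases huA with h | h
      · exact h
      · exact absurd (Or.inr h : v ∈ extVerts E Δ ∨ u ∈ Δ).symm (by exact fun _ => huB (Or.inr h))
    have hv : v ∈ extVerts E Δ := by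
      rcases hvB with h | h
      · exact h
      · exact absurd (Or.inr h) hvA
    exact not_adj_int_ext E hu hv
  have hperfect_iff : IsPerfect G ↔ PerfOn G Set.univ := by
    constructor
    · intro h T _
      exact h T
    · intro h S
      exact h S (Set.subset_univ S)
  rw [hperfect_iff, isPerfect_induce_iff, isPerfect_induce_iff]
  constructor
  · intro h
    exact ⟨fun T hT => h T (Set.subset_univ T), fun T hT => h T (Set.subset_univ T)⟩
  · rintro ⟨h1, h2⟩
    exact perfOn_union hU hK hE h1 h2
end
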